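/- Let G, W ∈ ℝ^{N×N} with G diagonal. Define B = (I − WG)(I − WG)ᵀ and C = (I − GW)ᵀ(I − GW), and for vectors u, r ∈ ℝ^N define ΔW₁ = −η G (I − GW)^{-ᵀ} u rᵀ (assuming I − GW invertible) and ΔW₃ = −η (I − WG) G u rᵀ (I − GW)ᵀ (I − GW). Then ΔW₃ = B ΔW₁ C. -/
import Mathlib


open Matrix

/-- With `B = (I - WG)(I - WG)ᵀ`, `C = (I - GW)ᵀ(I - GW)`,
`ΔW₁ = -η G (I - GW)⁻ᵀ u rᵀ` and `ΔW₃ = -η (I - WG) G u rᵀ (I - GW)ᵀ (I - GW)`,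
one has `ΔW₃ = B ΔW₁ C`. -/
theorem stmt14 (N : ℕ) (G W : Matrix (Fin N) (Fin N) ℝ) (hG : G.IsDiag)
    (hGW : IsUnit (1 - G * W).det) (η : ℝ) (u r : Fin N → ℝ) :
    (-η) • ((1 - W * G) * G * Matrix.vecMulVec u r * (1 - G * W)ᵀ * (1 - G * W))
      = ((1 - W * G) * (1 - W * G)ᵀ)
        * ((-η) • (G * ((1 - G * W)⁻¹)ᵀ * Matrix.vecMulVec u r))
        * ((1 - G * W)ᵀ * (1 - G * W)) := by
  have hsym : Gᵀ = G := by
    ext i j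
    rcases eq_or_ne i j with h | h
    · subst h; rfl
    · rw [transpose_apply, hG h.symm, hG h]
  have key : (1 - W * G)ᵀ * G = G * (1 - G * W)ᵀ := by
    simp only [transpose_sub, transpose_mul, transpose_one, hsym, sub_mul, mul_sub,
      one_mul, mul_one, mul_assoc]
  have hinv2 : (1 - G * W)ᵀ * ((1 - G * W)⁻¹)ᵀ = 1 := by
    rw [← transpose_mul, nonsing_inv_mul _ hGW, transpose_one]
  have key2 : (1 - W * G) * (1 - W * G)ᵀ * (G * ((1 - G * W)⁻¹)ᵀ) = (1 - W * G) * G := by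
    calc (1 - W * G) * (1 - W * G)ᵀ * (G * ((1 - G * W)⁻¹)ᵀ)
        = (1 - W * G) * ((1 - W * G)ᵀ * G * ((1 - G * W)⁻¹)ᵀ) := by
          simp only [mul_assoc]
      _ = (1 - W * G) * (G * ((1 - G * W)ᵀ * ((1 - G * W)⁻¹)ᵀ)) := by
          rw [key, mul_assoc]
      _ = (1 - W * G) * G := by rw [hinv2, mul_one]
  rw [Matrix.mul_smul, Matrix.smul_mul]
  congr 1
  calc (1 - W * G) * G * vecMulVec u r * (1 - G * W)ᵀ * (1 - G * W)
      = ((1 - W * G) * (1 - W * G)ᵀ * (G * ((1 - G * W)⁻¹)ᵀ)) * vecMulVec u r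
          * (1 - G * W)ᵀ * (1 - G * W) := by rw [key2]
    _ = (1 - W * G) * (1 - W * G)ᵀ * (G * ((1 - G * W)⁻¹)ᵀ * vecMulVec u r)
          * ((1 - G * W)ᵀ * (1 - G * W)) := by simp only [mul_assoc]
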